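/- arXiv:2304.00100 — 2 statements merged into one kernel-verified Lean document; each statement's English description precedes it below -/
import Mathlib

section
/- Let ψ : ℝⁿ → ℝᴺ be Lipschitz continuous with Lipschitz constant μ_g ≥ 0. Let C ∈ ℝ^{n×N}, K_x ∈ ℝ^{N×N}, K_u ∈ ℝ^{N×m} be matrices, and let x_{t−1}, x_t, x_{t+1} ∈ ℝⁿ and u_{t−1}, u_t ∈ ℝᵐ be vectors. Assume: (i) the Koopman relation is exact on the previous sample, ψ(x_t) = K_x ψ(x_{t−1}) + K_u u_{t−1}; (ii) the reconstruction error satisfies ‖x_t − C ψ(x_t)‖ ≤ l for some l ≥ 0; (iii) ‖x_{t+1} − x_t‖ ≤ μ_x and ‖x_t − x_{t−1}‖ ≤ μ_x; and (iv) ‖u_t − u_{t−1}‖ ≤ μ_u. Then the one-step prediction error of the Koopman model satisfies ‖C K_x ψ(x_t) + C K_u u_t − x_{t+1}‖ ≤ (‖C K_x‖ μ_g + 1) μ_x + ‖C K_u‖ μ_u + l, where ‖·‖ on matrices denotes the operator norm induced by the Euclidean norm. -/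
open scoped NNReal

/-- quantitative content of Lemma 2 of the paper: one-step prediction
error bound for the deep Koopman representation.  The matrices `C, K_x, K_u` are
formalized as continuous linear maps between Euclidean spaces, so that `‖·‖` is the
operator norm induced by the Euclidean norm. -/
theorem koopman_one_step_error_bound {n m N : ℕ} (μg : ℝ≥0) (μx μu l : ℝ)
    (ψ : EuclideanSpace ℝ (Fin n) → EuclideanSpace ℝ (Fin N))
    (hψ : LipschitzWith μg ψ)
    (C : EuclideanSpace ℝ (Fin N) →L[ℝ] EuclideanSpace ℝ (Fin n))
    (Kx : EuclideanSpace ℝ (Fin N) →L[ℝ] EuclideanSpace ℝ (Fin N))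
    (Ku : EuclideanSpace ℝ (Fin m) →L[ℝ] EuclideanSpace ℝ (Fin N))
    (xprev xt xnext : EuclideanSpace ℝ (Fin n))
    (uprev ut : EuclideanSpace ℝ (Fin m))
    (hl : 0 ≤ l)
    (hKoop : ψ xt = Kx (ψ xprev) + Ku uprev)
    (hrec : ‖xt - C (ψ xt)‖ ≤ l)
    (hx₁ : ‖xnext - xt‖ ≤ μx) (hx₂ : ‖xt - xprev‖ ≤ μx)
    (hu : ‖ut - uprev‖ ≤ μu) :
    ‖C (Kx (ψ xt)) + C (Ku ut) - xnext‖ ≤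
      (‖C.comp Kx‖ * (μg : ℝ) + 1) * μx + ‖C.comp Ku‖ * μu + l := by
  have key : C (Kx (ψ xt)) + C (Ku ut) - xnext =
      (C.comp Kx) (ψ xt - ψ xprev) + (C.comp Ku) (ut - uprev)
        + (C (ψ xt) - xt) + (xt - xnext) := by
    simp only [ContinuousLinearMap.comp_apply, map_sub]
    have h : C (ψ xt) = C (Kx (ψ xprev)) + C (Ku uprev) := by
      rw [hKoop, map_add]
    rw [h]; abel
  rw [key]
  have h1 : ‖(C.comp Kx) (ψ xt - ψ xprev)‖ ≤ ‖C.comp Kx‖ * ((μg : ℝ) * μx) := by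
    calc ‖(C.comp Kx) (ψ xt - ψ xprev)‖ ≤ ‖C.comp Kx‖ * ‖ψ xt - ψ xprev‖ :=
          (C.comp Kx).le_opNorm _
      _ ≤ ‖C.comp Kx‖ * ((μg : ℝ) * μx) := by
          apply mul_le_mul_of_nonneg_left _ (norm_nonneg _)
          calc ‖ψ xt - ψ xprev‖ = dist (ψ xt) (ψ xprev) := (dist_eq_norm _ _).symm
            _ ≤ (μg : ℝ) * dist xt xprev := hψ.dist_le_mul _ _
            _ ≤ (μg : ℝ) * μx := by
                apply mul_le_mul_of_nonneg_left _ μg.coe_nonneg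
                rw [dist_eq_norm]; exact hx₂
  have h2 : ‖(C.comp Ku) (ut - uprev)‖ ≤ ‖C.comp Ku‖ * μu :=
    le_trans ((C.comp Ku).le_opNorm _)
      (mul_le_mul_of_nonneg_left hu (norm_nonneg _))
  have h3 : ‖C (ψ xt) - xt‖ ≤ l := by rwa [norm_sub_rev]
  have h4 : ‖xt - xnext‖ ≤ μx := by rwa [norm_sub_rev]
  calc ‖(C.comp Kx) (ψ xt - ψ xprev) + (C.comp Ku) (ut - uprev)
        + (C (ψ xt) - xt) + (xt - xnext)‖
      ≤ ‖(C.comp Kx) (ψ xt - ψ xprev)‖ + ‖(C.comp Ku) (ut - uprev)‖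
        + ‖C (ψ xt) - xt‖ + ‖xt - xnext‖ :=
        le_trans (norm_add_le _ _) (by gcongr; exact le_trans (norm_add_le _ _) (by gcongr; exact norm_add_le _ _))
    _ ≤ ‖C.comp Kx‖ * ((μg : ℝ) * μx) + ‖C.comp Ku‖ * μu + l + μx := by
        gcongr
    _ = (‖C.comp Kx‖ * (μg : ℝ) + 1) * μx + ‖C.comp Ku‖ * μu + l := by ring
end

section
/- Let Z₁ ∈ ℝ^{p×τ₁}, Z₂ ∈ ℝ^{p×τ₂}, Y₁ ∈ ℝ^{N×τ₁}, Y₂ ∈ ℝ^{N×τ₂} be real matrices, and assume G = Z₁ Z₁′ is invertible and that the matrix γ = (I_{τ₂} + Z₂′ G⁻¹ Z₂)⁻¹ exists (i.e., I_{τ₂} + Z₂′ G⁻¹ Z₂ is invertible) and that G + Z₂ Z₂′ is invertible. Let K₁ = Y₁ Z₁′ G⁻¹ be the least-squares solution on the first data batch. Then the recursively updated operator equals the batch least-squares solution on the combined data: K₁ + (Y₂ − K₁ Z₂) γ Z₂′ G⁻¹ = (Y₁ Z₁′ + Y₂ Z₂′)(Z₁ Z₁′ + Z₂ Z₂′)⁻¹.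 (Since concatenating the columns of (Z₁, Z₂) into Z and of (Y₁, Y₂) into Y gives Z Z′ = Z₁Z₁′ + Z₂Z₂′ and Y Z′ = Y₁Z₁′ + Y₂Z₂′, the right-hand side is exactly the least-squares fit Y Z′ (Z Z′)⁻¹ on all the data.) -/
open scoped Matrix

/-- Lemma 1 of the paper, recursive least-squares update: the
recursively updated Koopman operator equals the batch least-squares solution on
the combined data. -/
theorem recursive_koopman_update_eq_batch {N p τ₁ τ₂ : ℕ}
    (Z₁ : Matrix (Fin p) (Fin τ₁) ℝ) (Z₂ : Matrix (Fin p) (Fin τ₂) ℝ)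
    (Y₁ : Matrix (Fin N) (Fin τ₁) ℝ) (Y₂ : Matrix (Fin N) (Fin τ₂) ℝ)
    (hG : IsUnit (Z₁ * Z₁ᵀ))
    (hγ : IsUnit ((1 : Matrix (Fin τ₂) (Fin τ₂) ℝ) + Z₂ᵀ * (Z₁ * Z₁ᵀ)⁻¹ * Z₂))
    (hGZ : IsUnit (Z₁ * Z₁ᵀ + Z₂ * Z₂ᵀ)) :
    Y₁ * Z₁ᵀ * (Z₁ * Z₁ᵀ)⁻¹ +
        (Y₂ - Y₁ * Z₁ᵀ * (Z₁ * Z₁ᵀ)⁻¹ * Z₂) *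
          ((1 : Matrix (Fin τ₂) (Fin τ₂) ℝ) + Z₂ᵀ * (Z₁ * Z₁ᵀ)⁻¹ * Z₂)⁻¹ * Z₂ᵀ *
          (Z₁ * Z₁ᵀ)⁻¹ =
      (Y₁ * Z₁ᵀ + Y₂ * Z₂ᵀ) * (Z₁ * Z₁ᵀ + Z₂ * Z₂ᵀ)⁻¹ := by
  set G := Z₁ * Z₁ᵀ with hGdef
  set M := Z₂ᵀ * G⁻¹ * Z₂ with hMdef
  set D := Y₂ - Y₁ * Z₁ᵀ * G⁻¹ * Z₂ with hDdef
  have hGdet := (Matrix.isUnit_iff_isUnit_det _).mp hG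
  have hγdet := (Matrix.isUnit_iff_isUnit_det _).mp hγ
  have hGZdet := (Matrix.isUnit_iff_isUnit_det _).mp hGZ
  have hinvG : G⁻¹ * G = 1 := Matrix.nonsing_inv_mul _ hGdet
  have hinvγ : ((1 : Matrix (Fin τ₂) (Fin τ₂) ℝ) + M)⁻¹ * (1 + M) = 1 :=
    Matrix.nonsing_inv_mul _ hγdet
  have hinvGZ : (G + Z₂ * Z₂ᵀ) * (G + Z₂ * Z₂ᵀ)⁻¹ = 1 :=
    Matrix.mul_nonsing_inv _ hGZdet
  have key : Z₂ᵀ * G⁻¹ * (G + Z₂ * Z₂ᵀ) = (1 + M) * Z₂ᵀ := by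
    rw [Matrix.mul_add, Matrix.add_mul, Matrix.one_mul,
      Matrix.mul_assoc Z₂ᵀ G⁻¹ G, hinvG, Matrix.mul_one, hMdef]
    simp only [Matrix.mul_assoc]
  have key2 : D * (1 + M)⁻¹ * Z₂ᵀ * G⁻¹ * (G + Z₂ * Z₂ᵀ) = D * Z₂ᵀ := by
    rw [Matrix.mul_assoc (D * (1 + M)⁻¹) Z₂ᵀ G⁻¹,
      Matrix.mul_assoc (D * (1 + M)⁻¹), key, ← Matrix.mul_assoc,
      Matrix.mul_assoc D, hinvγ, Matrix.mul_one]
  suffices h : (Y₁ * Z₁ᵀ * G⁻¹ + D * (1 + M)⁻¹ * Z₂ᵀ * G⁻¹) * (G + Z₂ * Z₂ᵀ)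
      = Y₁ * Z₁ᵀ + Y₂ * Z₂ᵀ by
    rw [← h, Matrix.mul_assoc _ (G + Z₂ * Z₂ᵀ), hinvGZ, Matrix.mul_one]
  rw [Matrix.add_mul, key2, Matrix.mul_add (Y₁ * Z₁ᵀ * G⁻¹),
    Matrix.mul_assoc (Y₁ * Z₁ᵀ) G⁻¹ G, hinvG, Matrix.mul_one, hDdef,
    Matrix.sub_mul, ← Matrix.mul_assoc (Y₁ * Z₁ᵀ * G⁻¹) Z₂ Z₂ᵀ]
  abel
end
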